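/- Let τ > 0, σ > 1, and define the associated function T_{τ,σ,h}(k) = sup_{p∈ℕ} max(0, ln(h^{p^σ} k^p / p^{τ p^σ})) for k > 0, with the convention 0^{τ·0^σ} = 1. Then for any h > 0 and any τ₂ > τ > τ₁ > 0 there exist real constants A, B such that T_{τ₂,σ,1}(k) + A ≤ T_{τ,σ,h}(k) ≤ T_{τ₁,σ,1}(k) + B for all k > 0. -/

import Mathlib

open Real Finset

lemma max_add_le' (a b : ℝ) : max 0 (a + b) ≤ max 0 a + max 0 b :=
  max_le (add_nonneg (le_max_left 0 a) (le_max_left 0 b))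
    (add_le_add (le_max_right 0 a) (le_max_right 0 b))

lemma bound_aux (σ c d : ℝ) (hd : d < 0) :
    ∃ C : ℝ, 0 ≤ C ∧ ∀ p : ℕ, max 0 ((p : ℝ) ^ σ * (c + d * Real.log p)) ≤ C := by
  obtain ⟨N, hN⟩ := exists_nat_ge (Real.exp (c / (-d)))
  set C := ∑ q ∈ Finset.range (N + 1), max 0 ((q : ℝ) ^ σ * (c + d * Real.log q)) with hC
  have hC0 : 0 ≤ C := Finset.sum_nonneg fun q _ => le_max_left 0 _
  refine ⟨C, hC0, fun p => ?_⟩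
  by_cases hp : p < N + 1
  · exact Finset.single_le_sum (f := fun q : ℕ => max 0 ((q : ℝ) ^ σ * (c + d * Real.log q)))
      (fun q _ => le_max_left 0 _) (Finset.mem_range.mpr hp)
  · push_neg at hp
    have hpN : (N : ℝ) ≤ p := by exact_mod_cast Nat.le_of_succ_le hp
    have h2 : c / (-d) ≤ Real.log p := by
      rw [← Real.log_exp (c / (-d))]
      exact Real.log_le_log (Real.exp_pos _) (hN.trans hpN)
    have hd' : (0:ℝ) < -d := by linarith
    have h3 : c + d * Real.log p ≤ 0 := by
      have h4 := mul_le_mul_of_nonneg_left h2 hd'.le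
      have h5 : (-d) * (c / (-d)) = c := mul_div_cancel₀ c (ne_of_gt hd')
      nlinarith
    have h6 : (p : ℝ) ^ σ * (c + d * Real.log p) ≤ 0 :=
      mul_nonpos_of_nonneg_of_nonpos (Real.rpow_nonneg (Nat.cast_nonneg p) σ) h3
    exact max_le hC0 (h6.trans hC0)

lemma log_key (σ τ h k : ℝ) (hh : 0 < h) (hk : 0 < k) (p : ℕ) (hp : 1 ≤ p) :
    Real.log (h ^ ((p : ℝ) ^ σ) * k ^ p / (p : ℝ) ^ (τ * (p : ℝ) ^ σ)) =
      (p : ℝ) ^ σ * Real.log h + p * Real.log k - τ * (p : ℝ) ^ σ * Real.log p := by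
  have hp0 : (0:ℝ) < p := by exact_mod_cast hp
  rw [Real.log_div (by positivity) (by positivity),
    Real.log_mul (by positivity) (by positivity),
    Real.log_rpow hh, Real.log_pow, Real.log_rpow hp0]

lemma bdd_term (σ : ℝ) (hσ : 1 < σ) (τ' h' k : ℝ) (hτ' : 0 < τ') (hh' : 0 < h') (hk : 0 < k)
    (M : ℝ → ℕ → ℝ) (hM0 : M τ' 0 = 1)
    (hM : ∀ p : ℕ, 1 ≤ p → M τ' p = (p : ℝ) ^ (τ' * (p : ℝ) ^ σ)) :
    BddAbove (Set.range (fun p : ℕ =>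
      max 0 (Real.log (h' ^ ((p : ℝ) ^ σ) * k ^ p / M τ' p)))) := by
  obtain ⟨C, hC0, hC⟩ := bound_aux σ (|Real.log h'| + |Real.log k|) (-τ') (by linarith)
  refine ⟨C, fun x hx => ?_⟩
  obtain ⟨p, rfl⟩ := hx
  rcases Nat.eq_zero_or_pos p with rfl | hp
  · simpa [hM0, Real.zero_rpow (by linarith : σ ≠ 0)] using hC0
  · refine le_trans (max_le_max le_rfl ?_) (hC p)
    rw [hM p hp, log_key σ τ' h' k hh' hk p hp]
    have hp1 : (1:ℝ) ≤ p := by exact_mod_cast hp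
    have hps : (p : ℝ) ≤ (p : ℝ) ^ σ := by
      calc (p:ℝ) = (p:ℝ) ^ (1:ℝ) := (Real.rpow_one _).symm
        _ ≤ _ := Real.rpow_le_rpow_of_exponent_le hp1 hσ.le
    have hpsn : (0:ℝ) ≤ (p : ℝ) ^ σ := Real.rpow_nonneg (Nat.cast_nonneg p) σ
    have h1 : (p : ℝ) ^ σ * Real.log h' ≤ (p : ℝ) ^ σ * |Real.log h'| :=
      mul_le_mul_of_nonneg_left (le_abs_self _) hpsn
    have h2 : (p : ℝ) * Real.log k ≤ (p : ℝ) ^ σ * |Real.log k| :=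
      calc (p:ℝ) * Real.log k ≤ (p:ℝ) * |Real.log k| :=
            mul_le_mul_of_nonneg_left (le_abs_self _) (Nat.cast_nonneg p)
        _ ≤ (p:ℝ) ^ σ * |Real.log k| := mul_le_mul_of_nonneg_right hps (abs_nonneg _)
    nlinarith

/-- Comparison of the associated functions: for h > 0 and τ₂ > τ > τ₁ > 0 there exist
    A, B ∈ ℝ with T_{τ₂,σ,1}(k) + A ≤ T_{τ,σ,h}(k) ≤ T_{τ₁,σ,1}(k) + B for all k > 0. -/
theorem stmt_13 (σ : ℝ) (hσ : 1 < σ) (M : ℝ → ℕ → ℝ) (T : ℝ → ℝ → ℝ → ℝ)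
    (hM0 : ∀ τ : ℝ, M τ 0 = 1)
    (hM : ∀ τ : ℝ, ∀ p : ℕ, 1 ≤ p → M τ p = (p : ℝ) ^ (τ * (p : ℝ) ^ σ))
    (hT : ∀ τ h k : ℝ, T τ h k =
      ⨆ p : ℕ, max 0 (Real.log (h ^ ((p : ℝ) ^ σ) * k ^ p / M τ p))) :
    ∀ h : ℝ, 0 < h → ∀ τ τ₁ τ₂ : ℝ, 0 < τ₁ → τ₁ < τ → τ < τ₂ →
      ∃ A B : ℝ, ∀ k : ℝ, 0 < k →
        T τ₂ 1 k + A ≤ T τ h k ∧ T τ h k ≤ T τ₁ 1 k + B := by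
  intro h hh τ τ₁ τ₂ hτ₁ hτ₁τ hττ₂
  have hτ : 0 < τ := hτ₁.trans hτ₁τ
  obtain ⟨B, hB0, hB⟩ := bound_aux σ (Real.log h) (τ₁ - τ) (by linarith)
  obtain ⟨A, hA0, hA⟩ := bound_aux σ (-Real.log h) (τ - τ₂) (by linarith)
  refine ⟨-A, B, fun k hk => ?_⟩
  have one_pos' : (0:ℝ) < 1 := one_pos
  set f : ℝ → ℝ → ℕ → ℝ := fun τ' h' p =>
    max 0 (Real.log (h' ^ ((p : ℝ) ^ σ) * k ^ p / M τ' p)) with hfdef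
  have hσ0 : σ ≠ 0 := by linarith
  have hf0 : ∀ τ' h', f τ' h' 0 = 0 := by
    intro τ' h'
    simp [hfdef, hM0, Real.zero_rpow hσ0, Real.rpow_zero]
  have hbdd : ∀ τ' h', 0 < τ' → 0 < h' → BddAbove (Set.range (f τ' h')) := by
    intro τ' h' hτ' hh'
    exact bdd_term σ hσ τ' h' k hτ' hh' hk M (hM0 τ') (hM τ')
  -- pointwise comparison: f τ h p ≤ f τ₁ 1 p + B
  have cmpB : ∀ p : ℕ, f τ h p ≤ f τ₁ 1 p + B := by
    intro p
    rcases Nat.eq_zero_or_pos p with rfl | hp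
    · rw [hf0, hf0]; linarith
    · have key : Real.log (h ^ ((p : ℝ) ^ σ) * k ^ p / M τ p) =
          Real.log ((1:ℝ) ^ ((p : ℝ) ^ σ) * k ^ p / M τ₁ p) +
            (p : ℝ) ^ σ * (Real.log h + (τ₁ - τ) * Real.log p) := by
        rw [hM τ p hp, hM τ₁ p hp, log_key σ τ h k hh hk p hp,
          log_key σ τ₁ 1 k one_pos hk p hp]
        simp [Real.log_one]
        ring
      calc f τ h p ≤ f τ₁ 1 p +
            max 0 ((p : ℝ) ^ σ * (Real.log h + (τ₁ - τ) * Real.log p)) := by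
            rw [hfdef]; dsimp only; rw [key]
            exact max_add_le' _ _
        _ ≤ f τ₁ 1 p + B := by exact add_le_add_right (hB p) _
  -- pointwise comparison: f τ₂ 1 p ≤ f τ h p + A
  have cmpA : ∀ p : ℕ, f τ₂ 1 p ≤ f τ h p + A := by
    intro p
    rcases Nat.eq_zero_or_pos p with rfl | hp
    · rw [hf0, hf0]; linarith
    · have key : Real.log ((1:ℝ) ^ ((p : ℝ) ^ σ) * k ^ p / M τ₂ p) =
          Real.log (h ^ ((p : ℝ) ^ σ) * k ^ p / M τ p) +
            (p : ℝ) ^ σ * (-Real.log h + (τ - τ₂) * Real.log p) := by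
        rw [hM τ p hp, hM τ₂ p hp, log_key σ τ h k hh hk p hp,
          log_key σ τ₂ 1 k one_pos hk p hp]
        simp [Real.log_one]
        ring
      calc f τ₂ 1 p ≤ f τ h p +
            max 0 ((p : ℝ) ^ σ * (-Real.log h + (τ - τ₂) * Real.log p)) := by
            rw [hfdef]; dsimp only; rw [key]
            exact max_add_le' _ _
        _ ≤ f τ h p + A := add_le_add_right (hA p) _
  have hTh : T τ h k = ⨆ p, f τ h p := hT τ h k
  have hT1 : T τ₁ 1 k = ⨆ p, f τ₁ 1 p := hT τ₁ 1 k
  have hT2 : T τ₂ 1 k = ⨆ p, f τ₂ 1 p := hT τ₂ 1 k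
  constructor
  · rw [hT2, hTh]
    have : (⨆ p, f τ₂ 1 p) ≤ (⨆ p, f τ h p) + A := by
      refine ciSup_le fun p => (cmpA p).trans (add_le_add_left ?_ A)
      exact le_ciSup (hbdd τ h hτ hh) p
    linarith
  · rw [hTh, hT1]
    refine ciSup_le fun p => (cmpB p).trans (add_le_add_left ?_ B)
    exact le_ciSup (hbdd τ₁ 1 hτ₁ one_pos) p
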